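/- If a string p of length m is aperiodic, then p can match a text with its left endpoint at at most one position within any block of ⌈m/2⌉ consecutive text positions. -/
import Mathlib


def Aperiodic {α : Type*} {m : ℕ} (p : Fin m → α) : Prop :=
  ∀ d, 1 ≤ d → d ≤ m / 2 → ∃ k, ∃ hk : k < m, d ≤ k ∧ p ⟨k, hk⟩ ≠ p ⟨k - d, by omega⟩

/-- `p` matches the text `t` with left endpoint at position `i`. -/
def Matches {α : Type*} {m : ℕ} (p : Fin m → α) (t : ℕ → α) (i : ℕ) : Prop :=
  ∀ j : Fin m, t (i + (j : ℕ)) = p j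

lemma aux_no_occ {α : Type*} {m : ℕ} (p : Fin m → α)
    (hap : Aperiodic p) (t : ℕ → α) (i₁ i₂ : ℕ)
    (h1 : Matches p t i₁) (h2 : Matches p t i₂)
    (hlt : i₁ < i₂) (hd : i₂ - i₁ ≤ m / 2) : False := by
  set d := i₂ - i₁ with hdd
  have hd1 : 1 ≤ d := by omega
  obtain ⟨k, hk, hdk, hne⟩ := hap d hd1 hd
  apply hne
  have e1 : t (i₁ + k) = p ⟨k, hk⟩ := h1 ⟨k, hk⟩
  have e2 : t (i₂ + (k - d)) = p ⟨k - d, by omega⟩ := h2 ⟨k - d, by omega⟩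
  rw [← e1, ← e2]
  congr 1
  omega

/-- An aperiodic pattern can match at most one position within any window of
`m/2` consecutive shifts: two occurrences at distance at most `m/2` coincide. -/
theorem aperiodic_unique_occurrence {α : Type*} {m : ℕ} (p : Fin m → α)
    (hap : Aperiodic p) (t : ℕ → α) (i₁ i₂ : ℕ)
    (h1 : Matches p t i₁) (h2 : Matches p t i₂)
    (hd1 : i₁ - i₂ ≤ m / 2) (hd2 : i₂ - i₁ ≤ m / 2) :
    i₁ = i₂ := by
  rcases lt_trichotomy i₁ i₂ with h | h | h
  · exact absurd (aux_no_occ p hap t i₁ i₂ h1 h2 h hd2) (by simp)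
  · exact h
  · exact absurd (aux_no_occ p hap t i₂ i₁ h2 h1 h hd1) (by simp)
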